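/- The function τ(t) = -log(t + e^{-t} - 1) is convex on (0, ∞). -/

import Mathlib

open Real Set Filter

private lemma g_pos {t : ℝ} (ht : 0 < t) : 0 < t + Real.exp (-t) - 1 := by
  have h := Real.add_one_lt_exp (x := -t) (by linarith)
  linarith

private lemma hasDerivAt_g (t : ℝ) :
    HasDerivAt (fun t : ℝ => t + Real.exp (-t) - 1) (1 - Real.exp (-t)) t := by
  have h1 : HasDerivAt (fun t : ℝ => Real.exp (-t)) (-Real.exp (-t)) t := by
    simpa [Function.comp_def] using (Real.hasDerivAt_exp (-t)).comp t (hasDerivAt_neg t)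
  simpa [← sub_eq_add_neg] using ((hasDerivAt_id t).add h1).sub_const 1

private lemma hasDerivAt_tau {t : ℝ} (ht : 0 < t) :
    HasDerivAt (fun t : ℝ => -Real.log (t + Real.exp (-t) - 1))
      (-((1 - Real.exp (-t)) / (t + Real.exp (-t) - 1))) t :=
  ((hasDerivAt_g t).log (ne_of_gt (g_pos ht))).neg

private lemma hasDerivAt_phi {t : ℝ} (ht : 0 < t) :
    HasDerivAt (fun t : ℝ => -((1 - Real.exp (-t)) / (t + Real.exp (-t) - 1)))
      (((Real.exp (-t)) * (t + Real.exp (-t) - 1) - (1 - Real.exp (-t)) ^ 2) /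
        (t + Real.exp (-t) - 1) ^ 2 * (-1)) t := by
  have hn : HasDerivAt (fun t : ℝ => 1 - Real.exp (-t)) (Real.exp (-t)) t := by
    have h1 : HasDerivAt (fun t : ℝ => Real.exp (-t)) (-Real.exp (-t)) t := by
      simpa [Function.comp_def] using (Real.hasDerivAt_exp (-t)).comp t (hasDerivAt_neg t)
    simpa [Pi.sub_def] using (hasDerivAt_const t (1 : ℝ)).sub h1
  have := (hn.div (hasDerivAt_g t) (ne_of_gt (g_pos ht))).neg
  exact this.congr_deriv (by ring)

private lemma phi_deriv_nonneg {t : ℝ} (ht : 0 < t) :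
    0 ≤ ((Real.exp (-t)) * (t + Real.exp (-t) - 1) - (1 - Real.exp (-t)) ^ 2) /
        (t + Real.exp (-t) - 1) ^ 2 * (-1) := by
  set u := Real.exp (-t) with hu
  have hg := g_pos ht
  have h1 : u * (1 + t) ≤ 1 := by
    have h2 : t + 1 ≤ Real.exp t := Real.add_one_le_exp t
    have h3 : u * Real.exp t = 1 := by
      rw [hu, ← Real.exp_add]; simp
    calc u * (1 + t) ≤ u * Real.exp t := by
          have : (0:ℝ) < u := Real.exp_pos _
          nlinarith
      _ = 1 := h3
  have hnum : u * (t + u - 1) - (1 - u) ^ 2 ≤ 0 := by nlinarith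
  have hden : (0:ℝ) < (t + u - 1) ^ 2 := by positivity
  have heq : (u * (t + u - 1) - (1 - u) ^ 2) / (t + u - 1) ^ 2 * (-1)
      = ((1 - u) ^ 2 - u * (t + u - 1)) / (t + u - 1) ^ 2 := by ring
  rw [heq]
  exact div_nonneg (by nlinarith) hden.le

/-- τ(t) = -log(t + e^{-t} - 1) is convex on (0, ∞). -/
theorem tau_convexOn :
    ConvexOn ℝ (Set.Ioi 0) (fun t : ℝ => -Real.log (t + Real.exp (-t) - 1)) := by
  set f := fun t : ℝ => -Real.log (t + Real.exp (-t) - 1)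
  have hint : interior (Set.Ioi (0:ℝ)) = Set.Ioi 0 := interior_Ioi
  have hderiv_eq : ∀ t ∈ Set.Ioi (0:ℝ), deriv f =ᶠ[nhds t]
      fun t : ℝ => -((1 - Real.exp (-t)) / (t + Real.exp (-t) - 1)) := by
    intro t ht
    exact Filter.eventuallyEq_of_mem (Ioi_mem_nhds ht) fun x hx => (hasDerivAt_tau hx).deriv
  apply convexOn_of_deriv2_nonneg (convex_Ioi 0)
  · exact fun t ht => ((hasDerivAt_tau ht).differentiableAt.continuousAt).continuousWithinAt
  · rw [hint]
    exact fun t ht => (hasDerivAt_tau ht).differentiableAt.differentiableWithinAt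
  · rw [hint]
    intro t ht
    have : HasDerivAt (deriv f)
        (((Real.exp (-t)) * (t + Real.exp (-t) - 1) - (1 - Real.exp (-t)) ^ 2) /
          (t + Real.exp (-t) - 1) ^ 2 * (-1)) t :=
      (hasDerivAt_phi ht).congr_of_eventuallyEq (hderiv_eq t ht)
    exact this.differentiableAt.differentiableWithinAt
  · rw [hint]
    intro t ht
    have h : HasDerivAt (deriv f)
        (((Real.exp (-t)) * (t + Real.exp (-t) - 1) - (1 - Real.exp (-t)) ^ 2) /
          (t + Real.exp (-t) - 1) ^ 2 * (-1)) t :=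
      (hasDerivAt_phi ht).congr_of_eventuallyEq (hderiv_eq t ht)
    have : deriv (deriv f) t = _ := h.deriv
    show 0 ≤ deriv (deriv f) t
    rw [this]
    exact phi_deriv_nonneg ht
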